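/- arXiv:1608.02522 — 2 statements merged into one kernel-verified Lean document; each statement's English description precedes it below -/
import Mathlib

section
/- Let k ≥ 0, m = 4k+3, ζ a primitive m-th root of unity. For integers i, ℓ with 0 ≤ i ≤ 2k+2 and 0 ≤ ℓ ≤ 2k, the sum ∑_{s=0}^{8k+5} ζ^{(2i-2ℓ-3)s} (-1)^{s(2+ℓ-i)} is nonzero if and only if (i, ℓ) = (0, 2k). -/
/-- For ζ a primitive (4k+3)-th root of unity and 0 ≤ i ≤ 2k+2, 0 ≤ ℓ ≤ 2k,
    the sum ∑_{s=0}^{8k+5} ζ^{(2i-2ℓ-3)s}(-1)^{s(2+ℓ-i)} is nonzero iff (i,ℓ)=(0,2k). -/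
theorem stmt_5 (k : ℕ) (ζ : ℂ) (hζ : IsPrimitiveRoot ζ (4 * k + 3))
    (i ℓ : ℤ) (hi0 : 0 ≤ i) (hi : i ≤ 2 * k + 2) (hl0 : 0 ≤ ℓ) (hl : ℓ ≤ 2 * k) :
    (∑ s ∈ Finset.range (8 * k + 6),
        ζ ^ ((2 * i - 2 * ℓ - 3) * (s : ℤ)) * (-1 : ℂ) ^ ((s : ℤ) * (2 + ℓ - i)) ≠ 0) ↔
      (i = 0 ∧ ℓ = 2 * k) := by
  set e : ℤ := 2 * i - 2 * ℓ - 3 with he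
  set f : ℤ := 2 + ℓ - i with hf
  set r : ℂ := ζ ^ e * (-1 : ℂ) ^ f with hr
  have key : ∀ s : ℕ, ζ ^ (e * (s : ℤ)) * (-1 : ℂ) ^ ((s : ℤ) * f) = r ^ s := by
    intro s
    rw [hr, zpow_mul, mul_comm (s : ℤ) f, zpow_mul, ← mul_zpow, zpow_natCast]
  have hsum : (∑ s ∈ Finset.range (8 * k + 6),
      ζ ^ (e * (s : ℤ)) * (-1 : ℂ) ^ ((s : ℤ) * f)) =
      ∑ s ∈ Finset.range (8 * k + 6), r ^ s :=
    Finset.sum_congr rfl fun s _ => key s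
  rw [hsum]
  have h1 : (ζ ^ e) ^ (8 * k + 6) = 1 := by
    rw [← zpow_natCast (ζ ^ e), ← zpow_mul]
    have : e * ((8 * k + 6 : ℕ) : ℤ) = ((4 * k + 3 : ℕ) : ℤ) * (2 * e) := by push_cast; ring
    rw [this, zpow_mul, zpow_natCast, hζ.pow_eq_one, one_zpow]
  have h2 : ((-1 : ℂ) ^ f) ^ (8 * k + 6) = 1 := by
    rw [← zpow_natCast ((-1 : ℂ) ^ f), ← zpow_mul]
    exact Even.neg_one_zpow ⟨f * (4 * k + 3), by push_cast; ring⟩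
  have hrpow : r ^ (8 * k + 6) = 1 := by
    rw [hr, mul_pow, h1, h2, one_mul]
  constructor
  · intro hne
    have hr1 : r = 1 := by
      by_contra h
      exact hne (by rw [geom_sum_eq h, hrpow, sub_self, zero_div])
    -- From r = 1, square to kill the sign and get a divisibility
    have hz2 : ζ ^ (e * 2) = 1 := by
      have hsq : r ^ 2 = 1 := by rw [hr1, one_pow]
      have hfsq : ((-1 : ℂ) ^ f) ^ 2 = 1 := by
        rw [← zpow_natCast ((-1 : ℂ) ^ f), ← zpow_mul]
        exact Even.neg_one_zpow ⟨f, by push_cast; ring⟩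
      have hmul : (ζ ^ e) ^ 2 * ((-1 : ℂ) ^ f) ^ 2 = 1 := by
        rw [← mul_pow, ← hr, hr1, one_pow]
      rw [hfsq, mul_one] at hmul
      have hcast : ζ ^ (e * 2) = (ζ ^ e) ^ 2 := by
        rw [← zpow_natCast (ζ ^ e), ← zpow_mul]; norm_num
      rw [hcast]; exact hmul
    have hdvd2 : ((4 * k + 3 : ℕ) : ℤ) ∣ e * 2 := (hζ.zpow_eq_one_iff_dvd (e * 2)).mp hz2
    have hdvd2' : (4 * (k : ℤ) + 3) ∣ e * 2 := by push_cast at hdvd2; convert hdvd2 using 2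
    have hcop : IsCoprime (2 : ℤ) (4 * (k : ℤ) + 3) :=
      (Int.prime_two.coprime_iff_not_dvd).mpr (by omega)
    have hdvd : (4 * (k : ℤ) + 3) ∣ e := hcop.symm.dvd_of_dvd_mul_right hdvd2'
    rcases lt_trichotomy e 0 with h | h | h
    · have hle : 4 * (k : ℤ) + 3 ≤ -e := Int.le_of_dvd (by omega) (dvd_neg.mpr hdvd)
      omega
    · omega
    · have hle : 4 * (k : ℤ) + 3 ≤ e := Int.le_of_dvd h hdvd
      omega
  · rintro ⟨rfl, rfl⟩
    have hz1 : ζ ^ e = 1 := by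
      have he' : e = -(((4 * k + 3 : ℕ) : ℤ)) := by rw [he]; push_cast; ring
      rw [he', zpow_neg, zpow_natCast, hζ.pow_eq_one, inv_one]
    have hf1 : (-1 : ℂ) ^ f = 1 :=
      Even.neg_one_zpow ⟨(k : ℤ) + 1, by rw [hf]; ring⟩
    have hr1 : r = 1 := by rw [hr, hz1, hf1, mul_one]
    rw [hr1]
    simp only [one_pow, Finset.sum_const, Finset.card_range, nsmul_eq_mul, mul_one]
    exact Nat.cast_ne_zero.mpr (by omega)
end

section
/- Let k ≥ 1 and ζ a primitive (4k+3)-th root of unity, α = diag(ζ, -ζ⁻¹). If L ∈ GL(2,ℂ) satisfies L⁻¹ ∘ Q ∘ L = Q for the vector field Q(x,y) = (y^{2k+2}/x^{2k}, 0), then L is diagonal. -/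
/-- For k ≥ 1, if an invertible L commutes (by conjugation) with the vector field
    Q(x,y) = (y^{2k+2}/x^{2k}, 0), then L is diagonal. -/
theorem stmt_19 (k : ℕ) (hk : 1 ≤ k) (ζ : ℂ) (hζ : IsPrimitiveRoot ζ (4 * k + 3))
    (L : Matrix (Fin 2) (Fin 2) ℂ) (hL : IsUnit L)
    (hinv : ∀ v : Fin 2 → ℂ, v 0 ≠ 0 → (L.mulVec v) 0 ≠ 0 →
      (L⁻¹).mulVec
          ((fun w : Fin 2 → ℂ => ![w 1 ^ (2 * k + 2) / w 0 ^ (2 * k), 0]) (L.mulVec v)) =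
        ![v 1 ^ (2 * k + 2) / v 0 ^ (2 * k), 0]) :
    L 0 1 = 0 ∧ L 1 0 = 0 := by
  have hdet : IsUnit L.det := (Matrix.isUnit_iff_isUnit_det L).mp hL
  have hLinv : L * L⁻¹ = 1 := Matrix.mul_nonsing_inv L hdet
  set a := L 0 0 with ha
  set b := L 0 1 with hb
  set c := L 1 0 with hc
  set d := L 1 1 with hd
  have hdet0 : a * d - b * c ≠ 0 := by
    have h := hdet.ne_zero
    rwa [Matrix.det_fin_two] at h
  -- main component equations
  have main : ∀ x : ℂ, x ≠ 0 → a * x + b ≠ 0 →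
      (c*x+d)^(2*k+2) / (a*x+b)^(2*k) = a / x^(2*k) ∧ c / x^(2*k) = 0 := by
    intro x hx hax
    have hLv : L.mulVec ![x,1] = ![a*x+b, c*x+d] := by
      funext i
      fin_cases i <;>
        simp [Matrix.mulVec, dotProduct, Fin.sum_univ_two, ha, hb, hc, hd]
    have h1 := hinv ![x,1] (by simp [hx]) (by rw [hLv]; simpa using hax)
    have h2 := congrArg L.mulVec h1
    rw [Matrix.mulVec_mulVec, hLinv, Matrix.one_mulVec, hLv] at h2
    have h20 := congrFun h2 0
    have h21 := congrFun h2 1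
    simp [Matrix.mulVec, dotProduct, Fin.sum_univ_two] at h20 h21
    constructor
    · rw [h20]; ring
    · rcases h21 with h | h
      · rw [hc, h]; simp
      · exact absurd h.1 hx
  -- find a good point to get c = 0
  have hgood : ∃ x : ℂ, x ≠ 0 ∧ a * x + b ≠ 0 := by
    by_cases h1 : a * 1 + b ≠ 0
    · exact ⟨1, one_ne_zero, h1⟩
    · push_neg at h1
      refine ⟨-1, by norm_num, ?_⟩
      intro h2
      have hA : a = 0 := by linear_combination (h1 - h2) / 2
      have hB : b = 0 := by linear_combination h1 - hA
      apply hdet0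
      rw [hA, hB]; ring
  obtain ⟨x₀, hx₀, hax₀⟩ := hgood
  have hc0 : c = 0 := by
    have := (main x₀ hx₀ hax₀).2
    rcases div_eq_zero_iff.mp this with h | h
    · exact h
    · exact absurd (pow_eq_zero_iff (by omega)|>.mp h) hx₀
  have hane : a ≠ 0 := by
    intro h; apply hdet0; rw [h, hc0]; ring
  -- polynomial argument for b = 0
  have hroot : ∀ x : ℂ, x ≠ 0 → a * x + b ≠ 0 →
      (Polynomial.C (d^(2*k+2)) * Polynomial.X^(2*k)
        - Polynomial.C a * (Polynomial.C a * Polynomial.X + Polynomial.C b)^(2*k)).IsRoot x := by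
    intro x hx hax
    have h := (main x hx hax).1
    rw [hc0] at h
    have hx' : x^(2*k) ≠ 0 := pow_ne_zero _ hx
    have hax' : (a*x+b)^(2*k) ≠ 0 := pow_ne_zero _ hax
    have heq : d^(2*k+2) * x^(2*k) = a * (a*x+b)^(2*k) := by
      field_simp at h
      rw [div_eq_iff (by rwa [mul_comm x a])] at h
      linear_combination h
    simp only [Polynomial.IsRoot, Polynomial.eval_sub, Polynomial.eval_mul, Polynomial.eval_pow,
      Polynomial.eval_add, Polynomial.eval_C, Polynomial.eval_X]
    rw [sub_eq_zero]
    simpa using heq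
  have hinf : {x : ℂ | (Polynomial.C (d^(2*k+2)) * Polynomial.X^(2*k)
        - Polynomial.C a * (Polynomial.C a * Polynomial.X + Polynomial.C b)^(2*k)).IsRoot x}.Infinite := by
    have hinfc : (({0, -b/a} : Set ℂ)ᶜ).Infinite := (Set.toFinite _).infinite_compl
    apply hinfc.mono
    intro x hx
    simp only [Set.mem_compl_iff, Set.mem_insert_iff, Set.mem_singleton_iff, not_or] at hx
    apply hroot x hx.1
    intro h
    apply hx.2
    field_simp
    linear_combination h
  have hP0 := Polynomial.eq_zero_of_infinite_isRoot _ hinf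
  have hev := congrArg (Polynomial.eval 0) hP0
  simp only [Polynomial.eval_sub, Polynomial.eval_mul, Polynomial.eval_pow,
    Polynomial.eval_add, Polynomial.eval_C, Polynomial.eval_X, Polynomial.eval_zero,
    mul_zero, zero_add] at hev
  rw [zero_pow (by omega : 2*k ≠ 0)] at hev
  have hb0 : b = 0 := by
    have : a * b^(2*k) = 0 := by linear_combination -hev
    rcases mul_eq_zero.mp this with h | h
    · exact absurd h hane
    · exact pow_eq_zero_iff (by omega) |>.mp h
  exact ⟨hb0, hc0⟩
end
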